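/- In Tsirelson's space T, for n odd let x_n = e_{n³} + (1/4) e_{n³+1}, and let y_m = (1/2) ∑_{i=1}^4 e_{m+i}. Then lim_{n odd, n→∞} lim_{m→∞} ∥x_n + y_m∥ = 13/8. -/

import Mathlib

/-- Restriction `E x` of a finitely supported sequence `x` to a set `E ⊆ ℕ`. -/
noncomputable def tRes (E : Finset ℕ) (x : ℕ →₀ ℝ) : ℕ →₀ ℝ := x.filter (· ∈ E)

/-- An admissible family for the Tsirelson norm: `n ≤ E_1 < ... < E_n`. -/
def tAdm (n : ℕ) (E : Fin n → Finset ℕ) : Prop :=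
  (∀ i : Fin n, ∀ a ∈ E i, n ≤ a) ∧
  (∀ i j : Fin n, i < j → ∀ a ∈ E i, ∀ b ∈ E j, a < b)

/-- `N` satisfies the implicit equation of the Tsirelson norm:
`‖x‖ = max(‖x‖_∞, sup_{n ≥ 2, n ≤ E_1 < ... < E_n} (1/2) ∑ ‖E_i x‖)`. -/
def tEq (N : (ℕ →₀ ℝ) → ℝ) : Prop :=
  ∀ x : ℕ →₀ ℝ, N x = max (⨆ i : ℕ, |x i|)
    (sSup {s : ℝ | ∃ n : ℕ, 2 ≤ n ∧ ∃ E : Fin n → Finset ℕ, tAdm n E ∧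
      s = (1 / 2) * ∑ i, N (tRes (E i) x)})

/-- `‖x‖_k = sup (1/2) ∑_{i=1}^k ‖E_i x‖` over `k ≤ E_1 < ... < E_k`. -/
noncomputable def tNormk (N : (ℕ →₀ ℝ) → ℝ) (k : ℕ) (x : ℕ →₀ ℝ) : ℝ :=
  sSup {s : ℝ | ∃ E : Fin k → Finset ℕ, tAdm k E ∧
    s = (1 / 2) * ∑ i, N (tRes (E i) x)}

/-- `z_n = (2/n²) ∑_{i=1}^{n²} e_{n³+i}`. -/
noncomputable def zvec (n : ℕ) : ℕ →₀ ℝ :=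
  ∑ i ∈ Finset.range (n ^ 2), Finsupp.single (n ^ 3 + i + 1) (2 / (n ^ 2 : ℝ))

/-- `x_n = e_{n³} + (1/4) e_{n³+1}` (for `n` odd). -/
noncomputable def xodd (n : ℕ) : ℕ →₀ ℝ :=
  Finsupp.single (n ^ 3) 1 + Finsupp.single (n ^ 3 + 1) (1 / 4)

/-- `y_m = (1/2) ∑_{i=1}^4 e_{m+i}`. -/
noncomputable def yvec (m : ℕ) : ℕ →₀ ℝ :=
  ∑ i ∈ Finset.range 4, Finsupp.single (m + i + 1) (1 / 2 : ℝ)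

open Finset Finsupp

def tS (N : (ℕ →₀ ℝ) → ℝ) (x : ℕ →₀ ℝ) : Set ℝ :=
  {s : ℝ | ∃ n : ℕ, 2 ≤ n ∧ ∃ E : Fin n → Finset ℕ, tAdm n E ∧
      s = (1 / 2) * ∑ i, N (tRes (E i) x)}

lemma tEq_eq {N} (hN : tEq N) (x : ℕ →₀ ℝ) :
    N x = max (⨆ i : ℕ, |x i|) (sSup (tS N x)) := hN x

noncomputable def l1 (x : ℕ →₀ ℝ) : ℝ := ∑ k ∈ x.support, |x k|

lemma l1_nonneg (x : ℕ →₀ ℝ) : 0 ≤ l1 x :=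
  Finset.sum_nonneg fun _ _ => abs_nonneg _

lemma abs_apply_le_l1 (x : ℕ →₀ ℝ) (k : ℕ) : |x k| ≤ l1 x := by
  by_cases hk : k ∈ x.support
  · exact Finset.single_le_sum (f := fun k => |x k|) (fun _ _ => abs_nonneg _) hk
  · rw [Finsupp.notMem_support_iff.mp hk]
    simpa using l1_nonneg x

lemma tRes_apply (E : Finset ℕ) (x : ℕ →₀ ℝ) (k : ℕ) :
    tRes E x k = if k ∈ E then x k else 0 := by
  simp [tRes, Finsupp.filter_apply]

lemma tRes_support (E : Finset ℕ) (x : ℕ →₀ ℝ) :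
    (tRes E x).support = x.support ∩ E := by
  simp [tRes, Finsupp.support_filter, Finset.filter_mem_eq_inter]

lemma tRes_zero (E : Finset ℕ) : tRes E 0 = 0 := by
  ext k; simp [tRes_apply]

lemma l1_tRes (E : Finset ℕ) (x : ℕ →₀ ℝ) :
    l1 (tRes E x) = ∑ k ∈ x.support ∩ E, |x k| := by
  rw [l1, tRes_support]
  refine Finset.sum_congr rfl fun k hk => ?_
  rw [tRes_apply, if_pos (Finset.mem_inter.mp hk).2]

lemma tAdm_disj {n} {E : Fin n → Finset ℕ} (h : tAdm n E) {i j : Fin n} (hij : i ≠ j)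
    {k : ℕ} (hi : k ∈ E i) (hj : k ∈ E j) : False := by
  rcases lt_or_gt_of_ne hij with h' | h'
  · exact lt_irrefl k (h.2 i j h' k hi k hj)
  · exact lt_irrefl k (h.2 j i h' k hj k hi)

lemma sum_l1_le {n} {E : Fin n → Finset ℕ} (h : tAdm n E) (x : ℕ →₀ ℝ)
    {F : Finset ℕ} (hF : ∀ i, x.support ∩ E i ⊆ F) :
    ∑ i : Fin n, l1 (tRes (E i) x) ≤ ∑ k ∈ F, |x k| := by
  have hdisj : ∀ i ∈ (Finset.univ : Finset (Fin n)), ∀ j ∈ Finset.univ, i ≠ j →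
      Disjoint (x.support ∩ E i) (x.support ∩ E j) := by
    intro i _ j _ hij
    refine Finset.disjoint_left.mpr fun k hk hk' => ?_
    exact tAdm_disj h hij (Finset.mem_inter.mp hk).2 (Finset.mem_inter.mp hk').2
  calc ∑ i : Fin n, l1 (tRes (E i) x)
      = ∑ i : Fin n, ∑ k ∈ x.support ∩ E i, |x k| := by
        exact Finset.sum_congr rfl fun i _ => l1_tRes _ _
    _ = ∑ k ∈ Finset.univ.biUnion (fun i => x.support ∩ E i), |x k| :=
        (Finset.sum_biUnion hdisj).symm
    _ ≤ ∑ k ∈ F, |x k| := by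
        refine Finset.sum_le_sum_of_subset_of_nonneg ?_ (fun _ _ _ => abs_nonneg _)
        intro k hk
        rcases Finset.mem_biUnion.mp hk with ⟨i, _, hki⟩
        exact hF i hki

lemma tAdm_empty (n : ℕ) : tAdm n (fun _ : Fin n => (∅ : Finset ℕ)) := by
  constructor <;> intro i <;> simp

lemma N_zero {N} (hN : tEq N) : N 0 = 0 := by
  have h0 := tEq_eq hN 0
  have hsup : (⨆ i : ℕ, |(0 : ℕ →₀ ℝ) i|) = 0 := by simp
  have hS : ∀ s ∈ tS N 0, ∃ n : ℕ, 2 ≤ n ∧ s = (n : ℝ) * N 0 / 2 := by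
    rintro s ⟨n, hn, E, _, rfl⟩
    refine ⟨n, hn, ?_⟩
    simp [tRes_zero]; ring
  have hmem : ∀ n : ℕ, 2 ≤ n → ((n : ℝ) * N 0 / 2) ∈ tS N 0 := by
    intro n hn
    refine ⟨n, hn, fun _ => ∅, tAdm_empty n, ?_⟩
    simp [tRes_zero]; ring
  by_contra hne
  have hpos : 0 < N 0 := by
    rcases lt_or_ge 0 (N 0) with h | h
    · exact h
    · rcases eq_or_lt_of_le h with h' | h'
      · exact absurd h' hne
      · exfalso
        -- N 0 < 0 : then sSup ≤ N 0? anyway N 0 = max(0, sSup) ≥ 0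
        have : (0:ℝ) ≤ N 0 := by rw [h0, hsup]; exact le_max_left _ _
        linarith
  have hnb : ¬ BddAbove (tS N 0) := by
    rintro ⟨b, hb⟩
    obtain ⟨n, hn2, hn⟩ : ∃ n : ℕ, 2 ≤ n ∧ b < (n : ℝ) * N 0 / 2 := by
      obtain ⟨n, hn⟩ := exists_nat_gt (max 2 (2 * b / N 0))
      refine ⟨n, ?_, ?_⟩
      · exact_mod_cast le_of_lt (lt_of_le_of_lt (le_max_left _ _) hn)
      · have h2 : 2 * b / N 0 < n := lt_of_le_of_lt (le_max_right _ _) hn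
        rw [div_lt_iff₀ hpos] at h2
        rw [lt_div_iff₀ (by norm_num : (0:ℝ) < 2)]
        nlinarith
    exact absurd (hb (hmem n hn2)) (not_le.mpr hn)
  have := Real.sSup_of_not_bddAbove hnb
  rw [h0, hsup, this] at hne
  simp at hne
lemma N_nonneg {N} (hN : tEq N) (x : ℕ →₀ ℝ) : 0 ≤ N x := by
  rw [tEq_eq hN x]
  refine le_max_of_le_left ?_
  refine le_ciSup_of_le ⟨l1 x, ?_⟩ 0 (abs_nonneg _)
  rintro r ⟨i, rfl⟩; exact abs_apply_le_l1 x i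

lemma N_le_l1 {N} (hN : tEq N) (x : ℕ →₀ ℝ) : N x ≤ l1 x := by
  suffices h : ∀ K : ℕ, ∀ x : ℕ →₀ ℝ, x.support.card ≤ K → N x ≤ l1 x from
    h x.support.card x le_rfl
  intro K
  induction K with
  | zero =>
    intro x hx
    have hx0 : x = 0 := by
      rw [← Finsupp.support_eq_empty]
      exact Finset.card_eq_zero.mp (Nat.le_antisymm hx (Nat.zero_le _))
    rw [hx0, N_zero hN]; exact l1_nonneg 0
  | succ K ih =>
    intro x hx
    by_cases hx0 : x = 0
    · rw [hx0, N_zero hN]; exact l1_nonneg 0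
    have key : ∀ s ∈ tS N x, s ≤ max (l1 x) (N x / 2) := by
      rintro s ⟨n, hn2, E, hadm, rfl⟩
      by_cases hfull : ∃ i, x.support ⊆ E i
      · rcases hfull with ⟨i0, hi0⟩
        have hres : tRes (E i0) x = x := by
          ext k
          rw [tRes_apply]
          by_cases hk : k ∈ E i0
          · rw [if_pos hk]
          · rw [if_neg hk]
            by_contra h
            exact hk (hi0 (Finsupp.mem_support_iff.mpr fun h' => h h'.symm))
        have hres0 : ∀ j, j ≠ i0 → tRes (E j) x = 0 := by
          intro j hj
          ext k
          rw [tRes_apply]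
          by_cases hk : k ∈ E j
          · rw [if_pos hk, Finsupp.coe_zero, Pi.zero_apply]
            by_contra h
            exact tAdm_disj hadm hj hk (hi0 (Finsupp.mem_support_iff.mpr h))
          · rw [if_neg hk, Finsupp.coe_zero, Pi.zero_apply]
        have hsum : ∑ i, N (tRes (E i) x) = N x := by
          rw [Finset.sum_eq_single i0]
          · rw [hres]
          · intro j _ hj; rw [hres0 j hj, N_zero hN]
          · intro h; exact absurd (Finset.mem_univ i0) h
        rw [hsum]
        exact le_max_of_le_right (by linarith)
      · push_neg at hfull
        have hsub : ∀ i, N (tRes (E i) x) ≤ l1 (tRes (E i) x) := by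
          intro i
          refine ih _ ?_
          have hcard : ((tRes (E i) x).support).card < x.support.card := by
            apply Finset.card_lt_card
            rw [tRes_support]
            refine ⟨Finset.inter_subset_left, fun hsub => ?_⟩
            obtain ⟨k, hk, hkE⟩ : ∃ k ∈ x.support, k ∉ E i := by
              by_contra h
              push_neg at h
              exact hfull i h
            exact hkE (Finset.mem_inter.mp (hsub hk)).2
          omega
        have h1 : (1/2 : ℝ) * ∑ i, N (tRes (E i) x) ≤ (1/2) * ∑ i, l1 (tRes (E i) x) := by
          have := Finset.sum_le_sum (fun i (_ : i ∈ Finset.univ) => hsub i)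
          linarith
        have h2 : ∑ i : Fin n, l1 (tRes (E i) x) ≤ l1 x :=
          sum_l1_le hadm x (fun i => Finset.inter_subset_left)
        refine le_max_of_le_left ?_
        have := l1_nonneg x
        linarith
    have hS : sSup (tS N x) ≤ max (l1 x) (N x / 2) :=
      Real.sSup_le key (le_max_of_le_left (l1_nonneg x))
    have hsup : (⨆ i : ℕ, |x i|) ≤ l1 x := ciSup_le (abs_apply_le_l1 x)
    have hNx : N x ≤ max (l1 x) (N x / 2) :=
      calc N x = max (⨆ i : ℕ, |x i|) (sSup (tS N x)) := tEq_eq hN x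
        _ ≤ max (l1 x) (N x / 2) := max_le (le_trans hsup (le_max_left _ _)) hS
    rcases max_cases (l1 x) (N x / 2) with ⟨heq, _⟩ | ⟨heq, _⟩ <;> rw [heq] at hNx
    · exact hNx
    · linarith [l1_nonneg x]

lemma tS_le_half_l1 {N} (hN : tEq N) {x : ℕ →₀ ℝ} {s : ℝ} (hs : s ∈ tS N x) :
    s ≤ l1 x / 2 := by
  rcases hs with ⟨n, hn2, E, hadm, rfl⟩
  have h1 : ∑ i : Fin n, N (tRes (E i) x) ≤ ∑ i : Fin n, l1 (tRes (E i) x) :=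
    Finset.sum_le_sum fun i _ => N_le_l1 hN _
  have h2 : ∑ i : Fin n, l1 (tRes (E i) x) ≤ l1 x :=
    sum_l1_le hadm x (fun i => Finset.inter_subset_left)
  linarith

lemma N_le_max {N} (hN : tEq N) (x : ℕ →₀ ℝ) {B : ℝ} (hB : 0 ≤ B)
    (h1 : ∀ k, |x k| ≤ B) (h2 : ∀ s ∈ tS N x, s ≤ B) : N x ≤ B := by
  rw [tEq_eq hN x]
  exact max_le (ciSup_le h1) (Real.sSup_le h2 hB)

lemma mem_le_N {N} (hN : tEq N) {x : ℕ →₀ ℝ} {s : ℝ} (hs : s ∈ tS N x) : s ≤ N x := by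
  have hb : BddAbove (tS N x) := ⟨l1 x / 2, fun t ht => tS_le_half_l1 hN ht⟩
  calc s ≤ sSup (tS N x) := le_csSup hb hs
    _ ≤ N x := by rw [tEq_eq hN x]; exact le_max_right _ _

lemma abs_le_N {N} (hN : tEq N) (x : ℕ →₀ ℝ) (k : ℕ) : |x k| ≤ N x := by
  have hb : BddAbove (Set.range fun i : ℕ => |x i|) := by
    refine ⟨l1 x, ?_⟩
    rintro r ⟨i, rfl⟩
    exact abs_apply_le_l1 x i
  calc |x k| ≤ ⨆ i : ℕ, |x i| := le_ciSup hb k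
    _ ≤ N x := by rw [tEq_eq hN x]; exact le_max_left _ _

lemma N_single {N} (hN : tEq N) (k : ℕ) (a : ℝ) : N (Finsupp.single k a) = |a| := by
  refine le_antisymm (le_trans (N_le_l1 hN _) ?_) ?_
  · by_cases ha : a = 0
    · simp [ha, l1]
    · rw [l1, Finsupp.support_single_ne_zero k ha]
      simp
  · simpa using abs_le_N hN (Finsupp.single k a) k

lemma yvec_apply (m k : ℕ) :
    yvec m k = ∑ i ∈ Finset.range 4, (if m + i + 1 = k then (1/2 : ℝ) else 0) := by
  rw [yvec, Finset.sum_apply']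
  exact Finset.sum_congr rfl fun i _ => Finsupp.single_apply

lemma yvec_mem (m i : ℕ) (hi : i < 4) : yvec m (m + i + 1) = 1/2 := by
  rw [yvec_apply, Finset.sum_eq_single i]
  · rw [if_pos rfl]
  · intro j _ hj
    rw [if_neg (by omega)]
  · intro h
    exact absurd (Finset.mem_range.mpr hi) h

lemma yvec_notmem (m k : ℕ) (h : ∀ i, i < 4 → k ≠ m + i + 1) : yvec m k = 0 := by
  rw [yvec_apply]
  refine Finset.sum_eq_zero fun i hi => ?_
  rw [if_neg fun hc => h i (Finset.mem_range.mp hi) hc.symm]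

lemma xodd_apply (n k : ℕ) :
    xodd n k = (if n ^ 3 = k then (1:ℝ) else 0) + (if n ^ 3 + 1 = k then (1/4:ℝ) else 0) := by
  rw [xodd, Finsupp.add_apply, Finsupp.single_apply, Finsupp.single_apply]

section wlemmas

lemma w_a (n m : ℕ) (hm : n ^ 3 + 1 ≤ m) : (xodd n + yvec m) (n ^ 3) = 1 := by
  rw [Finsupp.add_apply, xodd_apply, yvec_notmem m _ (by omega)]
  simp

lemma w_a1 (n m : ℕ) (hm : n ^ 3 + 1 ≤ m) : (xodd n + yvec m) (n ^ 3 + 1) = 1/4 := by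
  rw [Finsupp.add_apply, xodd_apply, yvec_notmem m _ (by omega)]
  simp

lemma w_t (n m : ℕ) (hm : n ^ 3 + 1 ≤ m) (i : ℕ) (hi : i < 4) :
    (xodd n + yvec m) (m + i + 1) = 1/2 := by
  rw [Finsupp.add_apply, xodd_apply, yvec_mem m i hi, if_neg (by omega), if_neg (by omega)]
  norm_num

lemma w_other (n m : ℕ) (k : ℕ) (h1 : k ≠ n ^ 3) (h2 : k ≠ n ^ 3 + 1)
    (h3 : ∀ i, i < 4 → k ≠ m + i + 1) : (xodd n + yvec m) k = 0 := by
  rw [Finsupp.add_apply, xodd_apply, yvec_notmem m k h3, if_neg (fun h => h1 h.symm),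
    if_neg (fun h => h2 h.symm)]
  norm_num

lemma w_abs_le (n m : ℕ) (hm : n ^ 3 + 1 ≤ m) (k : ℕ) : |(xodd n + yvec m) k| ≤ 1 := by
  by_cases h1 : k = n ^ 3
  · rw [h1, w_a n m hm]; norm_num
  by_cases h2 : k = n ^ 3 + 1
  · rw [h2, w_a1 n m hm]; norm_num [abs_le]
  by_cases h3 : ∀ i, i < 4 → k ≠ m + i + 1
  · rw [w_other n m k h1 h2 h3]; norm_num
  · push_neg at h3
    obtain ⟨i, hi, rfl⟩ := h3
    rw [w_t n m hm i hi]; norm_num [abs_le]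

lemma w_supp (n m : ℕ) :
    (xodd n + yvec m).support ⊆ {n ^ 3, n ^ 3 + 1, m + 1, m + 2, m + 3, m + 4} := by
  intro k hk
  rw [Finsupp.mem_support_iff] at hk
  simp only [Finset.mem_insert, Finset.mem_singleton]
  by_contra h
  push_neg at h
  obtain ⟨h1, h2, h3, h4, h5, h6⟩ := h
  exact hk (w_other n m k h1 h2 (by omega))

end wlemmas

lemma tRes_singleton (k : ℕ) (x : ℕ →₀ ℝ) : tRes {k} x = Finsupp.single k (x k) := by
  ext k'
  rw [tRes_apply, Finsupp.single_apply]
  by_cases h : k' = k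
  · subst h; simp
  · rw [if_neg (by simp [h]), if_neg (fun hc => h hc.symm)]

lemma abs_half : |(1:ℝ)/2| = 1/2 := abs_of_nonneg (by norm_num)
lemma abs_quarter : |(1:ℝ)/4| = 1/4 := abs_of_nonneg (by norm_num)

lemma l1_w_le (n m : ℕ) (hm : n ^ 3 + 1 ≤ m) : l1 (xodd n + yvec m) ≤ 13/4 := by
  set w := xodd n + yvec m with hw
  have h1 : l1 w ≤ ∑ k ∈ ({n^3, n^3+1, m+1, m+2, m+3, m+4} : Finset ℕ), |w k| :=
    Finset.sum_le_sum_of_subset_of_nonneg (w_supp n m) (fun _ _ _ => abs_nonneg _)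
  refine le_trans h1 ?_
  rw [Finset.sum_insert (by simp only [Finset.mem_insert, Finset.mem_singleton]; omega),
    Finset.sum_insert (by simp only [Finset.mem_insert, Finset.mem_singleton]; omega),
    Finset.sum_insert (by simp only [Finset.mem_insert, Finset.mem_singleton]; omega),
    Finset.sum_insert (by simp only [Finset.mem_insert, Finset.mem_singleton]; omega),
    Finset.sum_insert (by simp only [Finset.mem_singleton]; omega),
    Finset.sum_singleton]
  have e1 : w (m+1) = 1/2 := w_t n m hm 0 (by norm_num)
  have e2 : w (m+2) = 1/2 := w_t n m hm 1 (by norm_num)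
  have e3 : w (m+3) = 1/2 := w_t n m hm 2 (by norm_num)
  have e4 : w (m+4) = 1/2 := w_t n m hm 3 (by norm_num)
  rw [w_a n m hm, w_a1 n m hm, e1, e2, e3, e4, abs_half, abs_quarter, abs_one]
  norm_num

lemma N_w_generic {N} (hN : tEq N) (n m : ℕ) (hn : 2 ≤ n) (hm : n ^ 3 + 1 ≤ m) :
    N (xodd n + yvec m) = 13/8 := by
  set w := xodd n + yvec m with hw
  have ha : 6 ≤ n ^ 3 := by
    have : 2^3 ≤ n^3 := Nat.pow_le_pow_left hn 3
    omega
  refine le_antisymm ?_ ?_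
  · refine N_le_max hN w (by norm_num) (fun k => le_trans (w_abs_le n m hm k) (by norm_num)) ?_
    intro s hs
    have h1 := tS_le_half_l1 hN hs
    have h2 := l1_w_le n m hm
    rw [← hw] at h2
    linarith
  · set E : Fin 6 → Finset ℕ :=
      fun i => {if (i:ℕ) ≤ 1 then n^3 + (i:ℕ) else m + (i:ℕ) - 1} with hE
    have hadm : tAdm 6 E := by
      constructor
      · intro i a hai
        simp only [hE, Finset.mem_singleton] at hai
        have := i.isLt
        split at hai <;> omega
      · intro i j hij a hai b hbj
        simp only [hE, Finset.mem_singleton] at hai hbj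
        have h1 := i.isLt
        have h2 := j.isLt
        have h3 : (i:ℕ) < (j:ℕ) := hij
        split at hai <;> split at hbj <;> omega
    have hmem : (13/8 : ℝ) ∈ tS N w := by
      refine ⟨6, by norm_num, E, hadm, ?_⟩
      have hs : ∑ i : Fin 6, N (tRes (E i) w) = 13/4 := by
        have hterm : ∀ i : Fin 6, N (tRes (E i) w) =
            |w (if (i:ℕ) ≤ 1 then n^3 + (i:ℕ) else m + (i:ℕ) - 1)| := by
          intro i
          rw [hE]
          rw [tRes_singleton, N_single hN]
        rw [Finset.sum_congr rfl (fun i _ => hterm i), Fin.sum_univ_six]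
        simp only [show ((0:Fin 6):ℕ) = 0 from rfl, show ((1:Fin 6):ℕ) = 1 from rfl,
          show ((2:Fin 6):ℕ) = 2 from rfl, show ((3:Fin 6):ℕ) = 3 from rfl,
          show ((4:Fin 6):ℕ) = 4 from rfl, show ((5:Fin 6):ℕ) = 5 from rfl]
        norm_num
        have e1 : w (m+1) = 1/2 := w_t n m hm 0 (by norm_num)
        have e2 : w (m+2) = 1/2 := w_t n m hm 1 (by norm_num)
        have e3 : w (m+3) = 1/2 := w_t n m hm 2 (by norm_num)
        have e4 : w (m+4) = 1/2 := w_t n m hm 3 (by norm_num)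
        rw [w_a n m hm, w_a1 n m hm, e1, e2, e3, e4, abs_half, abs_quarter, abs_one]
        norm_num
      rw [hs]; norm_num
    exact mem_le_N hN hmem

lemma N_le_linf_half_l1 {N} (hN : tEq N) (x : ℕ →₀ ℝ) {c : ℝ} (hc : 0 ≤ c)
    (h : ∀ k, |x k| ≤ c) : N x ≤ max c (l1 x / 2) :=
  N_le_max hN x (le_max_of_le_left hc) (fun k => le_trans (h k) (le_max_left _ _))
    (fun _ hs => le_trans (tS_le_half_l1 hN hs) (le_max_right _ _))

section none_case

variable (m : ℕ) (hm : 5 ≤ m)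

lemma hm1 (hm : 5 ≤ m) : 1 ^ 3 + 1 ≤ m := by norm_num; omega

lemma w1_one (hm : 5 ≤ m) : (xodd 1 + yvec m) 1 = 1 := by
  have := w_a 1 m (hm1 m hm); simpa using this

lemma w1_two (hm : 5 ≤ m) : (xodd 1 + yvec m) 2 = 1/4 := by
  have := w_a1 1 m (hm1 m hm); norm_num at this; convert this using 2; exact Finsupp.add_apply _ _ _

lemma w1_tail (hm : 5 ≤ m) (i : ℕ) (hi : i < 4) : (xodd 1 + yvec m) (m + i + 1) = 1/2 :=
  w_t 1 m (hm1 m hm) i hi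

lemma w1_zero (k : ℕ) (h1 : k ≠ 1) (h2 : k ≠ 2) (h3 : ∀ i, i < 4 → k ≠ m + i + 1) :
    (xodd 1 + yvec m) k = 0 :=
  w_other 1 m k (by simpa using h1) (by norm_num; omega) h3

lemma w1_abs_tail (hm : 5 ≤ m) (k : ℕ) (h1 : k ≠ 1) (h2 : k ≠ 2) :
    |(xodd 1 + yvec m) k| ≤ 1/2 := by
  by_cases h3 : ∀ i, i < 4 → k ≠ m + i + 1
  · rw [w1_zero m k h1 h2 h3]; norm_num
  · push_neg at h3
    obtain ⟨i, hi, rfl⟩ := h3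
    rw [w1_tail m hm i hi, abs_half]

lemma w1_supp (hm : 5 ≤ m) (k : ℕ) (hk : k ∈ (xodd 1 + yvec m).support) :
    k = 1 ∨ k = 2 ∨ k ∈ ({m+1, m+2, m+3, m+4} : Finset ℕ) := by
  rw [Finsupp.mem_support_iff] at hk
  by_contra h
  push_neg at h
  obtain ⟨h1, h2, h3⟩ := h
  simp only [Finset.mem_insert, Finset.mem_singleton] at h3
  push_neg at h3
  exact hk (w1_zero m k h1 h2 (by omega))

lemma sum_T (hm : 5 ≤ m) :
    ∑ k ∈ ({m+1, m+2, m+3, m+4} : Finset ℕ), |(xodd 1 + yvec m) k| = 2 := by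
  rw [Finset.sum_insert (by simp only [Finset.mem_insert, Finset.mem_singleton]; omega),
    Finset.sum_insert (by simp only [Finset.mem_insert, Finset.mem_singleton]; omega),
    Finset.sum_insert (by simp only [Finset.mem_singleton]; omega),
    Finset.sum_singleton]
  have e1 : (xodd 1 + yvec m) (m+1) = 1/2 := w1_tail m hm 0 (by norm_num)
  have e2 : (xodd 1 + yvec m) (m+2) = 1/2 := w1_tail m hm 1 (by norm_num)
  have e3 : (xodd 1 + yvec m) (m+3) = 1/2 := w1_tail m hm 2 (by norm_num)
  have e4 : (xodd 1 + yvec m) (m+4) = 1/2 := w1_tail m hm 3 (by norm_num)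
  rw [e1, e2, e3, e4, abs_half]
  norm_num

lemma card_T : ({m+1, m+2, m+3, m+4} : Finset ℕ).card = 4 := by
  rw [Finset.card_insert_of_notMem (by simp only [Finset.mem_insert, Finset.mem_singleton]; omega),
    Finset.card_insert_of_notMem (by simp only [Finset.mem_insert, Finset.mem_singleton]; omega),
    Finset.card_insert_of_notMem (by simp only [Finset.mem_singleton]; omega),
    Finset.card_singleton]

end none_case

lemma N_w_one {N} (hN : tEq N) (m : ℕ) (hm : 5 ≤ m) : N (xodd 1 + yvec m) = 1 := by
  set w := xodd 1 + yvec m with hw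
  set T : Finset ℕ := {m+1, m+2, m+3, m+4} with hT
  refine le_antisymm ?_ ?_
  · -- upper bound
    refine N_le_max hN w zero_le_one (fun k => w_abs_le 1 m (hm1 m hm) k) ?_
    rintro s ⟨n, hn2, E, hadm, rfl⟩
    have h1E : ∀ i : Fin n, (1 : ℕ) ∉ E i := by
      intro i h
      have := hadm.1 i 1 h
      omega
    by_cases h2E : ∀ i : Fin n, (2 : ℕ) ∉ E i
    · -- case A : coordinate 2 not covered
      have hsub : ∀ i : Fin n, w.support ∩ E i ⊆ T := by
        intro i k hk
        rcases Finset.mem_inter.mp hk with ⟨hks, hkE⟩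
        rcases w1_supp m hm k hks with h | h | h
        · exact absurd (h ▸ hkE) (h1E i)
        · exact absurd (h ▸ hkE) (h2E i)
        · exact h
      have h1 : ∑ i : Fin n, N (tRes (E i) w) ≤ ∑ i : Fin n, l1 (tRes (E i) w) :=
        Finset.sum_le_sum fun i _ => N_le_l1 hN _
      have h2 : ∑ i : Fin n, l1 (tRes (E i) w) ≤ ∑ k ∈ T, |w k| := sum_l1_le hadm w hsub
      have h3 : ∑ k ∈ T, |w k| = 2 := sum_T m hm
      linarith
    · -- case B : some E i contains coordinate 2, forcing n = 2
      push_neg at h2E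
      obtain ⟨i0, h2i0⟩ := h2E
      have hn : n = 2 := le_antisymm (hadm.1 i0 2 h2i0) hn2
      subst hn
      have claim : ∀ i j : Fin 2, i ≠ j → 2 ∈ E i →
          N (tRes (E i) w) + N (tRes (E j) w) ≤ 2 := by
        intro i j hij h2i
        have h2j : (2:ℕ) ∉ E j := fun h => tAdm_disj hadm hij h2i h
        set tu := (T ∩ E i).card with htu
        set tv := (T ∩ E j).card with htv
        -- abs bounds
        have habs_u : ∀ k, |tRes (E i) w k| ≤ 1/2 := by
          intro k
          rw [tRes_apply]
          split
          · rename_i hk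
            by_cases hk2 : k = 2
            · rw [hk2, w1_two m hm, abs_quarter]; norm_num
            · exact w1_abs_tail m hm k (fun h => h1E i (h ▸ hk)) hk2
          · simp
        have habs_v : ∀ k, |tRes (E j) w k| ≤ 1/2 := by
          intro k
          rw [tRes_apply]
          split
          · rename_i hk
            exact w1_abs_tail m hm k (fun h => h1E j (h ▸ hk)) (fun h => h2j (h ▸ hk))
          · simp
        -- l1 bounds
        have habsT : ∀ k ∈ T, |w k| ≤ 1/2 := by
          intro k hk
          refine w1_abs_tail m hm k ?_ ?_ <;>
            · intro h
              rw [hT] at hk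
              simp only [Finset.mem_insert, Finset.mem_singleton] at hk
              omega
        have hl1u : l1 (tRes (E i) w) ≤ 1/4 + (tu : ℝ) * (1/2) := by
          have hsubu : (tRes (E i) w).support ⊆ insert 2 (T ∩ E i) := by
            rw [tRes_support]
            intro k hk
            rcases Finset.mem_inter.mp hk with ⟨hks, hkE⟩
            rcases w1_supp m hm k hks with h | h | h
            · exact absurd (h ▸ hkE) (h1E i)
            · rw [h]; exact Finset.mem_insert_self _ _
            · exact Finset.mem_insert_of_mem (Finset.mem_inter.mpr ⟨h, hkE⟩)
          have heq : l1 (tRes (E i) w) = ∑ k ∈ (tRes (E i) w).support, |w k| := by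
            rw [l1]
            refine Finset.sum_congr rfl fun k hk => ?_
            rw [tRes_apply, if_pos (Finset.mem_inter.mp ((tRes_support (E i) w) ▸ hk)).2]
          rw [heq]
          have h2T : (2:ℕ) ∉ T ∩ E i := by
            intro h
            rcases Finset.mem_inter.mp h with ⟨hT2, _⟩
            rw [hT] at hT2
            simp only [Finset.mem_insert, Finset.mem_singleton] at hT2
            omega
          calc ∑ k ∈ (tRes (E i) w).support, |w k|
              ≤ ∑ k ∈ insert 2 (T ∩ E i), |w k| :=
                Finset.sum_le_sum_of_subset_of_nonneg hsubu (fun _ _ _ => abs_nonneg _)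
            _ = |w 2| + ∑ k ∈ T ∩ E i, |w k| := Finset.sum_insert h2T
            _ ≤ 1/4 + (tu : ℝ) * (1/2) := by
                have hb : ∑ k ∈ T ∩ E i, |w k| ≤ tu • (1/2 : ℝ) :=
                  Finset.sum_le_card_nsmul _ _ _
                    (fun k hk => habsT k (Finset.mem_inter.mp hk).1)
                rw [nsmul_eq_mul] at hb
                rw [w1_two m hm, abs_quarter]
                linarith
        have hl1v : l1 (tRes (E j) w) ≤ (tv : ℝ) * (1/2) := by
          have hsubv : (tRes (E j) w).support ⊆ T ∩ E j := by
            rw [tRes_support]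
            intro k hk
            rcases Finset.mem_inter.mp hk with ⟨hks, hkE⟩
            rcases w1_supp m hm k hks with h | h | h
            · exact absurd (h ▸ hkE) (h1E j)
            · exact absurd (h ▸ hkE) h2j
            · exact Finset.mem_inter.mpr ⟨h, hkE⟩
          have heq : l1 (tRes (E j) w) = ∑ k ∈ (tRes (E j) w).support, |w k| := by
            rw [l1]
            refine Finset.sum_congr rfl fun k hk => ?_
            rw [tRes_apply, if_pos (Finset.mem_inter.mp ((tRes_support (E j) w) ▸ hk)).2]
          rw [heq]
          calc ∑ k ∈ (tRes (E j) w).support, |w k|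
              ≤ ∑ k ∈ T ∩ E j, |w k| :=
                Finset.sum_le_sum_of_subset_of_nonneg hsubv (fun _ _ _ => abs_nonneg _)
            _ ≤ (tv : ℝ) * (1/2) := by
                have hb : ∑ k ∈ T ∩ E j, |w k| ≤ tv • (1/2 : ℝ) :=
                  Finset.sum_le_card_nsmul _ _ _
                    (fun k hk => habsT k (Finset.mem_inter.mp hk).1)
                rwa [nsmul_eq_mul] at hb
        -- card bound
        have hcard : tu + tv ≤ 4 := by
          have hdisj : Disjoint (T ∩ E i) (T ∩ E j) := by
            refine Finset.disjoint_left.mpr fun k hk hk' => ?_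
            exact tAdm_disj hadm hij (Finset.mem_inter.mp hk).2 (Finset.mem_inter.mp hk').2
          have hcu : ((T ∩ E i) ∪ (T ∩ E j)).card = tu + tv :=
            Finset.card_union_of_disjoint hdisj
          have hsubT : (T ∩ E i) ∪ (T ∩ E j) ⊆ T :=
            Finset.union_subset Finset.inter_subset_left Finset.inter_subset_left
          have := Finset.card_le_card hsubT
          rw [hcu, hT] at this
          rw [card_T m] at this
          exact this
        -- norm bounds
        have hNu : N (tRes (E i) w) ≤ max (1/2) ((1/4 + (tu:ℝ) * (1/2))/2) := by
          refine le_trans (N_le_linf_half_l1 hN _ (by norm_num) habs_u) ?_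
          exact max_le_max le_rfl (by linarith)
        have hNv : N (tRes (E j) w) ≤ max (1/2) (((tv:ℝ) * (1/2))/2) := by
          refine le_trans (N_le_linf_half_l1 hN _ (by norm_num) habs_v) ?_
          exact max_le_max le_rfl (by linarith)
        rcases le_or_gt tu 1 with htu1 | htu1
        · have hru : (tu:ℝ) ≤ 1 := by exact_mod_cast htu1
          have hrv : (tv:ℝ) ≤ 4 := by
            have : tv ≤ 4 := by omega
            exact_mod_cast this
          have hu : N (tRes (E i) w) ≤ 1/2 :=
            le_trans hNu (max_le le_rfl (by linarith))
          have hv : N (tRes (E j) w) ≤ 1 :=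
            le_trans hNv (max_le (by norm_num) (by linarith))
          linarith
        · have hru : (tu:ℝ) ≤ 4 := by
            have : tu ≤ 4 := by omega
            exact_mod_cast this
          have hrv : (tv:ℝ) ≤ 2 := by
            have : tv ≤ 2 := by omega
            exact_mod_cast this
          have hu : N (tRes (E i) w) ≤ 9/8 :=
            le_trans hNu (max_le (by norm_num) (by linarith))
          have hv : N (tRes (E j) w) ≤ 1/2 :=
            le_trans hNv (max_le le_rfl (by linarith))
          linarith
      rw [Fin.sum_univ_two]
      fin_cases i0
      · have := claim 0 1 (by decide) h2i0
        linarith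
      · have := claim 1 0 (by decide) h2i0
        linarith
  · -- lower bound : 1 ∈ tS N w
    refine mem_le_N hN (s := 1) ⟨4, by norm_num, fun i : Fin 4 => {m + (i:ℕ) + 1}, ?_, ?_⟩
    · constructor
      · intro i a hai
        simp only [Finset.mem_singleton] at hai
        omega
      · intro i j hij a hai b hbj
        simp only [Finset.mem_singleton] at hai hbj
        have h3 : (i:ℕ) < (j:ℕ) := hij
        omega
    · have hterm : ∀ i : Fin 4, N (tRes ({m + (i:ℕ) + 1} : Finset ℕ) w) = 1/2 := by
        intro i
        rw [tRes_singleton, N_single hN, w1_tail m hm (i:ℕ) i.isLt, abs_half]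
      rw [Fin.sum_univ_four, hterm, hterm, hterm, hterm]
      norm_num


/-- in Tsirelson's space `T`,
`lim_{n odd, n→∞} lim_{m→∞} ‖x_n + y_m‖ = 13/8`. -/
theorem stmt12 (N : (ℕ →₀ ℝ) → ℝ) (hN : tEq N) :
    ∃ L : ℕ → ℝ,
      (∀ n : ℕ, Odd n →
        Filter.Tendsto (fun m => N (xodd n + yvec m)) Filter.atTop (nhds (L n))) ∧
      Filter.Tendsto (fun j => L (2 * j + 1)) Filter.atTop (nhds (13 / 8)) := by
  refine ⟨fun n => if n = 1 then 1 else 13/8, ?_, ?_⟩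
  · intro n hn
    by_cases h1 : n = 1
    · subst h1
      simp only [if_pos rfl]
      refine Filter.Tendsto.congr' ?_ tendsto_const_nhds
      filter_upwards [Filter.eventually_ge_atTop 5] with m hm
      exact (N_w_one hN m hm).symm
    · have h2 : 2 ≤ n := by
        rcases hn with ⟨k, rfl⟩
        omega
      simp only [if_neg h1]
      refine Filter.Tendsto.congr' ?_ tendsto_const_nhds
      filter_upwards [Filter.eventually_ge_atTop (n^3+1)] with m hm
      exact (N_w_generic hN n m h2 hm).symm
  · refine Filter.Tendsto.congr' ?_ tendsto_const_nhds
    filter_upwards [Filter.eventually_ge_atTop 1] with j hj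
    rw [if_neg (by omega)]
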